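/- Let T > 0, let h : ℝ → ℝ be Lipschitz continuous, α : [0,T] → ℝ continuous, y₀ ∈ ℝ and c ≥ 0. Let S̄ : [0,T] → ℝ be càdlàg, and let g : ℝ × ℝ → ℝ be continuous such that for every compact set K ⊂ ℝ there is L_K ≥ 0 with |g(x,y) − g(x,z)| ≤ L_K·|y − z| for all x, y, z ∈ K. Let p, q : [0,T] → ℝ be continuous and nondecreasing, set Θ := p − q (a continuous function of bounded variation), let μ_p and μ_q be the associated Lebesgue–Stieltjes measures, and let Y := Y^Θ. For each n ∈ ℕ let 0 = tⁿ₀ < tⁿ₁ < ⋯ < tⁿ_{mₙ} = T be a partition with max_{1≤k≤mₙ} (tⁿ_k − tⁿ_{k−1}) → 0 as n → ∞, define the càdlàg step function Θⁿ(t) := Θ(0) + Σ_{k=1}^{mₙ} (Θ(tⁿ_k) − Θ(tⁿ_{k−1}))·1_{[tⁿ_k, T]}(t), let Yⁿ := Y^{Θⁿ} (same y₀), and choose reals ξⁿ_k ∈ [min(aⁿ_k, bⁿ_k), max(aⁿ_k, bⁿ_k)] where aⁿ_k := g(S̄(tⁿ_k), Yⁿ(tⁿ_k−)) and bⁿ_k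 := g(S̄(tⁿ_k), Yⁿ(tⁿ_k−) + c·(Θ(tⁿ_k) − Θ(tⁿ_{k−1}))). Then sup_{t∈[0,T]} | Σ_{k : tⁿ_k ≤ t} ξⁿ_k·(Θ(tⁿ_k) − Θ(tⁿ_{k−1})) − ( ∫_{(0,t]} g(S̄(u), Y(u)) dμ_p(u) − ∫_{(0,t]} g(S̄(u), Y(u)) dμ_q(u) ) | → 0 as n → ∞. -/

import Mathlib

open Filter Set MeasureTheory Topology

noncomputable section

/-- A function `x : ℝ → ℝ` is càdlàg on `[0,T]`. -/
def Cadlag (T : ℝ) (x : ℝ → ℝ) : Prop :=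
  (∀ t ∈ Set.Ico (0:ℝ) T, Filter.Tendsto x (nhdsWithin t (Set.Ici t)) (nhds (x t))) ∧
  (∀ t ∈ Set.Ioc (0:ℝ) T, ∃ L : ℝ, Filter.Tendsto x (nhdsWithin t (Set.Iio t)) (nhds L))

/-- `Y` is the market impact process on `[0,T]` driven by the càdlàg strategy `Θ`. -/
def ImpactSol (T : ℝ) (h α : ℝ → ℝ) (y₀ : ℝ) (Θ Y : ℝ → ℝ) : Prop :=
  Cadlag T Y ∧ ∀ t ∈ Set.Icc (0:ℝ) T,
    Y t = y₀ + (Θ t - Θ 0) - ∫ s in (0:ℝ)..t, h (Y s) * α s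

/-- The left limit `x(t−)` of a càdlàg path, with the convention `x(0−) := x(0)`. -/
def leftVal (x : ℝ → ℝ) (t : ℝ) : ℝ := if t ≤ 0 then x 0 else Function.leftLim x t

lemma abs_sub_le_of_mem_uIcc' {ξ a b : ℝ} (h : ξ ∈ Set.uIcc a b) : |ξ - a| ≤ |b - a| := by
  rcases Set.mem_uIcc.1 h with ⟨h1, h2⟩ | ⟨h1, h2⟩
  · rw [abs_of_nonneg (by linarith), abs_of_nonneg (by linarith)]; linarith
  · rw [abs_of_nonpos (by linarith), abs_of_nonpos (by linarith)]; linarith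

lemma tendsto_right_clamp {T : ℝ} {x : ℝ → ℝ} (hT : 0 < T) (hx : Cadlag T x) (t : ℝ) :
    Filter.Tendsto (fun s => x (max 0 (min s T))) (nhdsWithin t (Set.Ici t))
      (nhds (x (max 0 (min t T)))) := by
  set ρ : ℝ → ℝ := fun s => max 0 (min s T) with hρ
  have hρcont : Continuous ρ := continuous_const.max ((continuous_id).min continuous_const)
  have hρmono : Monotone ρ := fun a b hab => max_le_max le_rfl (min_le_min hab le_rfl)
  by_cases ht : T ≤ t
  · have hconst : ∀ s ∈ Set.Ici t, x (ρ s) = x (ρ t) := by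
      intro s hs
      have h1 : ρ s = T := by
        simp only [hρ]
        rw [min_eq_right (le_trans ht hs), max_eq_right hT.le]
      have h2 : ρ t = T := by
        simp only [hρ]
        rw [min_eq_right ht, max_eq_right hT.le]
      rw [h1, h2]
    refine Filter.Tendsto.congr' ?_ tendsto_const_nhds
    filter_upwards [self_mem_nhdsWithin] with s hs using (hconst s hs).symm
  · push_neg at ht
    have hmem : ρ t ∈ Set.Ico (0:ℝ) T := by
      constructor
      · exact le_max_left _ _
      · simp only [hρ]
        rw [max_lt_iff]
        exact ⟨hT, lt_of_le_of_lt (min_le_left _ _) ht⟩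
    have h1 : Filter.Tendsto ρ (nhdsWithin t (Set.Ici t)) (nhdsWithin (ρ t) (Set.Ici (ρ t))) := by
      apply tendsto_nhdsWithin_of_tendsto_nhds_of_eventually_within
      · exact (hρcont.tendsto t).mono_left nhdsWithin_le_nhds
      · filter_upwards [self_mem_nhdsWithin] with s hs using hρmono hs
    exact (hx.1 (ρ t) hmem).comp h1

lemma clamp_measurable {T : ℝ} {x : ℝ → ℝ} (hT : 0 < T) (hx : Cadlag T x) :
    Measurable (fun s => x (max 0 (min s T))) := by
  set y : ℝ → ℝ := fun s => x (max 0 (min s T)) with hy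
  have hyr : ∀ t : ℝ, Filter.Tendsto y (nhdsWithin t (Set.Ici t)) (nhds (y t)) :=
    tendsto_right_clamp hT hx
  have key : ∀ s : ℝ, Filter.Tendsto (fun n : ℕ => y ((⌈s * 2 ^ n⌉ : ℤ) / 2 ^ n)) atTop
      (nhds (y s)) := by
    intro s
    set u : ℕ → ℝ := fun n => (⌈s * 2 ^ n⌉ : ℤ) / 2 ^ n with hu
    have hsu : ∀ n, s ≤ u n := by
      intro n
      rw [hu, le_div_iff₀ (by positivity : (0:ℝ) < 2 ^ n)]
      exact Int.le_ceil _
    have hub : ∀ n, u n ≤ s + (1/2) ^ n := by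
      intro n
      rw [hu, div_le_iff₀ (by positivity : (0:ℝ) < 2 ^ n)]
      have := (Int.ceil_lt_add_one (s * 2 ^ n)).le
      calc ((⌈s * 2 ^ n⌉ : ℤ) : ℝ) ≤ s * 2 ^ n + 1 := this
        _ = (s + (1/2) ^ n) * 2 ^ n := by
            rw [add_mul]
            congr 1
            rw [one_div, inv_pow, inv_mul_cancel₀ (by positivity : ((2:ℝ) ^ n) ≠ 0)]
    have hulim : Filter.Tendsto u atTop (nhds s) := by
      have h2 : Filter.Tendsto (fun n : ℕ => s + (1/2 : ℝ) ^ n) atTop (nhds (s + 0)) :=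
        tendsto_const_nhds.add (tendsto_pow_atTop_nhds_zero_of_lt_one (by norm_num) (by norm_num))
      rw [add_zero] at h2
      exact tendsto_of_tendsto_of_tendsto_of_le_of_le tendsto_const_nhds h2 hsu hub
    have hin : Filter.Tendsto u atTop (nhdsWithin s (Set.Ici s)) :=
      tendsto_nhdsWithin_of_tendsto_nhds_of_eventually_within _ hulim
        (Filter.Eventually.of_forall hsu)
    exact (hyr s).comp hin
  apply measurable_of_tendsto_metrizable
    (f := fun (n : ℕ) (s : ℝ) => y ((⌈s * 2 ^ n⌉ : ℤ) / 2 ^ n))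
  · intro n
    exact (measurable_from_top (f := fun k : ℤ => y ((k : ℝ) / 2 ^ n))).comp
      (Int.measurable_ceil.comp (measurable_id.mul_const _))
  · rw [tendsto_pi_nhds]
    exact key

lemma cadlag_bounded {T : ℝ} {x : ℝ → ℝ} (hT : 0 < T) (hx : Cadlag T x) :
    ∃ M : ℝ, 0 ≤ M ∧ ∀ s ∈ Set.Icc 0 T, |x s| ≤ M := by
  have key : ∀ t ∈ Set.Icc (0:ℝ) T, ∃ U : Set ℝ, IsOpen U ∧ t ∈ U ∧
      ∃ M : ℝ, ∀ s ∈ U ∩ Set.Icc 0 T, |x s| ≤ M := by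
    intro t ht
    obtain ⟨dr, hdr, hright⟩ : ∃ d : ℝ, 0 < d ∧ ∀ s, t ≤ s → s < t + d → s ≤ T →
        |x s| ≤ |x t| + 1 := by
      by_cases htT : t < T
      · have h1 := hx.1 t ⟨ht.1, htT⟩
        have h2 : ∀ᶠ s in nhdsWithin t (Set.Ici t), |x s - x t| < 1 := by
          have := Metric.tendsto_nhds.mp h1 1 one_pos
          filter_upwards [this] with s hs
          rwa [Real.dist_eq] at hs
        obtain ⟨v, hv, hsub⟩ := mem_nhdsGE_iff_exists_Ico_subset.mp h2
        refine ⟨v - t, by simpa using hv, fun s hs1 hs2 _ => ?_⟩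
        have h3 : |x s - x t| < 1 := hsub ⟨hs1, by linarith⟩
        have h4 := abs_sub_abs_le_abs_sub (x s) (x t)
        linarith
      · refine ⟨1, one_pos, fun s hs1 _ hs3 => ?_⟩
        have : s = t := le_antisymm (hs3.trans (le_of_not_gt htT)) hs1
        rw [this]; linarith [abs_nonneg (x t)]
    obtain ⟨dl, hdl, C, hleft⟩ : ∃ d : ℝ, 0 < d ∧ ∃ C : ℝ, ∀ s, t - d < s → s < t → 0 ≤ s →
        |x s| ≤ C := by
      by_cases h0t : 0 < t
      · obtain ⟨L, hL⟩ := hx.2 t ⟨h0t, ht.2⟩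
        have h2 : ∀ᶠ s in nhdsWithin t (Set.Iio t), |x s - L| < 1 := by
          have := Metric.tendsto_nhds.mp hL 1 one_pos
          filter_upwards [this] with s hs
          rwa [Real.dist_eq] at hs
        obtain ⟨l, hl, hsub⟩ := (mem_nhdsLT_iff_exists_Ioo_subset'
          (show t - 1 < t by linarith)).mp h2
        have hlt : l < t := hl
        refine ⟨t - l, by linarith, |L| + 1, fun s hs1 hs2 _ => ?_⟩
        have : |x s - L| < 1 := hsub ⟨by linarith, hs2⟩
        have h3 := abs_sub_abs_le_abs_sub (x s) L
        linarith
      · refine ⟨1, one_pos, 0, fun s hs1 hs2 hs3 => absurd (lt_of_le_of_lt hs3 hs2) ?_⟩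
        push_neg at h0t
        exact not_lt.mpr h0t
    refine ⟨Set.Ioo (t - dl) (t + dr), isOpen_Ioo, ⟨by linarith, by linarith⟩,
      max (|x t| + 1) C, fun s hs => ?_⟩
    rcases le_or_gt t s with hts | hts
    · exact le_trans (hright s hts hs.1.2 hs.2.2) (le_max_left _ _)
    · exact le_trans (hleft s hs.1.1 hts hs.2.1) (le_max_right _ _)
  choose! U hUopen hUmem M hM using key
  obtain ⟨fs, hfsmem, hcover⟩ := isCompact_Icc.elim_nhds_subcover U
    (fun z hz => (hUopen z hz).mem_nhds (hUmem z hz))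
  have hne : fs.Nonempty := by
    by_contra hemp
    rw [Finset.not_nonempty_iff_eq_empty] at hemp
    have : (0:ℝ) ∈ Set.Icc (0:ℝ) T := ⟨le_refl 0, hT.le⟩
    have := hcover this
    simp [hemp] at this
  refine ⟨fs.sup' hne (fun z => max (M z) 0), ?_, ?_⟩
  · obtain ⟨z, hz⟩ := hne
    exact le_trans (le_max_right (M z) 0) (Finset.le_sup' (fun z => max (M z) 0) hz)
  · intro s hs
    obtain ⟨z, hz, hsz⟩ := Set.mem_iUnion₂.mp (hcover hs)
    exact le_trans (le_trans (hM z (hfsmem z hz) s ⟨hsz, hs⟩) (le_max_left (M z) 0))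
      (Finset.le_sup' (fun z => max (M z) 0) hz)

lemma integrableOn_of_bounded'' {f : ℝ → ℝ} {μ : Measure ℝ} {s : Set ℝ} (hμ : μ s ≠ ⊤)
    (hf : Measurable f) (C : ℝ) (hC : ∀ x, |f x| ≤ C) : IntegrableOn f s μ := by
  have : IsFiniteMeasure (μ.restrict s) :=
    ⟨by rwa [Measure.restrict_apply_univ, lt_top_iff_ne_top]⟩
  exact Integrable.mono' (integrable_const C) hf.aestronglyMeasurable
    (Filter.Eventually.of_forall (fun x => by rw [Real.norm_eq_abs]; exact hC x))

lemma intervalIntegrable_of_bounded_meas {f : ℝ → ℝ} (hf : Measurable f) (C : ℝ)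
    (hC : ∀ x, |f x| ≤ C) (a b : ℝ) : IntervalIntegrable f volume a b := by
  rw [intervalIntegrable_iff]
  exact integrableOn_of_bounded'' (by rw [Set.uIoc_eq_union]; exact
    ((measure_union_le _ _).trans_lt (by
      rw [Real.volume_Ioc, Real.volume_Ioc]
      exact ENNReal.add_lt_top.mpr ⟨ENNReal.ofReal_lt_top, ENNReal.ofReal_lt_top⟩)).ne) hf C hC

lemma gronwall_int {K δ M T : ℝ} (hK : 0 ≤ K) (hδ : 0 ≤ δ) (hT : 0 ≤ T)
    {e : ℝ → ℝ} (hmeas : Measurable e) (h0 : ∀ s, 0 ≤ e s) (hM : ∀ s, e s ≤ M)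
    (hineq : ∀ s ∈ Set.Icc 0 T, e s ≤ δ + K * ∫ r in (0:ℝ)..s, e r) :
    ∀ s ∈ Set.Icc 0 T, e s ≤ δ * Real.exp (K * T) := by
  have hM0 : (0:ℝ) ≤ M := le_trans (h0 0) (hM 0)
  have habs : ∀ x : ℝ, |e x| ≤ M := fun x => abs_le.mpr ⟨by linarith [h0 x], hM x⟩
  have hint : ∀ a b : ℝ, IntervalIntegrable e volume a b :=
    intervalIntegrable_of_bounded_meas hmeas M habs
  have main : ∀ j : ℕ, ∀ s ∈ Set.Icc (0:ℝ) T,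
      e s ≤ δ * (∑ i ∈ Finset.range j, (K*s)^i / (i.factorial : ℝ))
        + M * (K*s)^j / (j.factorial : ℝ) := by
    intro j
    induction j with
    | zero =>
      intro s _
      simpa using hM s
    | succ j ih =>
      intro s hs
      have hs0 : (0:ℝ) ≤ s := hs.1
      have hKs : 0 ≤ K * s := mul_nonneg hK hs0
      -- integrability of the polynomial bound
      have hcont : Continuous (fun r : ℝ =>
          δ * (∑ i ∈ Finset.range j, (K*r)^i / (i.factorial : ℝ))
            + M * (K*r)^j / (j.factorial : ℝ)) := by
        apply Continuous.add
        · exact continuous_const.mul (continuous_finset_sum _ (fun i _ =>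
            (((continuous_const.mul continuous_id).pow i).div_const _)))
        · exact (continuous_const.mul ((continuous_const.mul continuous_id).pow j)).div_const _
      have h2 : (∫ r in (0:ℝ)..s, e r) ≤ ∫ r in (0:ℝ)..s,
          (δ * (∑ i ∈ Finset.range j, (K*r)^i / (i.factorial : ℝ))
            + M * (K*r)^j / (j.factorial : ℝ)) := by
        apply intervalIntegral.integral_mono_on hs0 (hint 0 s)
          (hcont.intervalIntegrable 0 s)
        intro r hr
        exact ih r ⟨hr.1, hr.2.trans hs.2⟩
      have hpint : ∀ i : ℕ, K * ∫ r in (0:ℝ)..s, (K*r)^i / (i.factorial : ℝ)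
          = (K*s)^(i+1) / ((i+1).factorial : ℝ) := by
        intro i
        have heq : (fun r : ℝ => (K*r)^i / (i.factorial : ℝ))
            = fun r : ℝ => (K^i / (i.factorial : ℝ)) * r^i := by
          funext r; rw [mul_pow]; ring
        rw [heq, intervalIntegral.integral_const_mul, integral_pow]
        have hfacne : ((i.factorial : ℝ)) ≠ 0 := Nat.cast_ne_zero.mpr i.factorial_ne_zero
        have : (((i+1).factorial : ℕ) : ℝ) = ((i:ℝ) + 1) * (i.factorial : ℝ) := by
          rw [Nat.factorial_succ]; push_cast; ring
        rw [this, mul_pow]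
        field_simp
        ring
      have step : K * ∫ r in (0:ℝ)..s,
          (δ * (∑ i ∈ Finset.range j, (K*r)^i / (i.factorial : ℝ))
            + M * (K*r)^j / (j.factorial : ℝ))
          = δ * (∑ i ∈ Finset.range j, (K*s)^(i+1) / ((i+1).factorial : ℝ))
            + M * ((K*s)^(j+1) / ((j+1).factorial : ℝ)) := by
        have hintsum : IntervalIntegrable (fun r : ℝ =>
            δ * (∑ i ∈ Finset.range j, (K*r)^i / (i.factorial : ℝ))) volume 0 s := by
          apply Continuous.intervalIntegrable
          exact continuous_const.mul (continuous_finset_sum _ (fun i _ =>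
            (((continuous_const.mul continuous_id).pow i).div_const _)))
        have hintpow : IntervalIntegrable (fun r : ℝ =>
            M * (K*r)^j / (j.factorial : ℝ)) volume 0 s := by
          apply Continuous.intervalIntegrable
          exact (continuous_const.mul ((continuous_const.mul continuous_id).pow j)).div_const _
        rw [intervalIntegral.integral_add hintsum hintpow]
        have e1 : (∫ r in (0:ℝ)..s, δ * (∑ i ∈ Finset.range j, (K*r)^i / (i.factorial : ℝ)))
            = δ * ∑ i ∈ Finset.range j, ∫ r in (0:ℝ)..s, (K*r)^i / (i.factorial : ℝ) := by
          rw [intervalIntegral.integral_const_mul]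
          congr 1
          rw [intervalIntegral.integral_finset_sum]
          intro i _
          apply Continuous.intervalIntegrable
          exact ((continuous_const.mul continuous_id).pow i).div_const _
        have e2 : (∫ r in (0:ℝ)..s, M * (K*r)^j / (j.factorial : ℝ))
            = M * ∫ r in (0:ℝ)..s, (K*r)^j / (j.factorial : ℝ) := by
          have : (fun r : ℝ => M * (K*r)^j / (j.factorial : ℝ))
              = fun r : ℝ => M * ((K*r)^j / (j.factorial : ℝ)) := by
            funext r; ring
          rw [this, intervalIntegral.integral_const_mul]
        rw [e1, e2, mul_add, mul_left_comm, Finset.mul_sum, mul_left_comm K M]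
        congr 1
        · congr 1
          exact Finset.sum_congr rfl (fun i _ => hpint i)
        · congr 1
          exact hpint j
      calc e s ≤ δ + K * ∫ r in (0:ℝ)..s, e r := hineq s hs
        _ ≤ δ + K * ∫ r in (0:ℝ)..s,
            (δ * (∑ i ∈ Finset.range j, (K*r)^i / (i.factorial : ℝ))
              + M * (K*r)^j / (j.factorial : ℝ)) := by
            have := mul_le_mul_of_nonneg_left h2 hK
            linarith
        _ = δ + (δ * (∑ i ∈ Finset.range j, (K*s)^(i+1) / ((i+1).factorial : ℝ))
              + M * ((K*s)^(j+1) / ((j+1).factorial : ℝ))) := by rw [step]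
        _ = δ * (∑ i ∈ Finset.range (j+1), (K*s)^i / (i.factorial : ℝ))
              + M * (K*s)^(j+1) / ((j+1).factorial : ℝ) := by
            rw [Finset.sum_range_succ' (fun i => (K*s)^i / (i.factorial : ℝ)) j]
            simp [mul_add]
            ring
  intro s hs
  have hKs : 0 ≤ K * s := mul_nonneg hK hs.1
  have hbd : ∀ j : ℕ, e s ≤ δ * Real.exp (K * T) + M * (K*s)^j / (j.factorial : ℝ) := by
    intro j
    refine le_trans (main j s hs) (add_le_add_left ?_ _)
    apply mul_le_mul_of_nonneg_left _ hδ
    calc (∑ i ∈ Finset.range j, (K*s)^i / (i.factorial : ℝ))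
        ≤ Real.exp (K*s) := Real.sum_le_exp_of_nonneg hKs j
      _ ≤ Real.exp (K*T) := Real.exp_le_exp.mpr
          (mul_le_mul_of_nonneg_left hs.2 hK)
  have hlim : Filter.Tendsto (fun j : ℕ => δ * Real.exp (K * T) + M * (K*s)^j / (j.factorial : ℝ))
      atTop (nhds (δ * Real.exp (K * T) + 0)) := by
    apply Filter.Tendsto.add tendsto_const_nhds
    have h1 : Filter.Tendsto (fun j : ℕ => ((K*s)^j / (j.factorial : ℝ))) atTop (nhds 0) :=
      FloorSemiring.tendsto_pow_div_factorial_atTop (K*s)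
    have := h1.const_mul M
    rw [mul_zero] at this
    refine this.congr (fun j => by ring)
  rw [add_zero] at hlim
  exact ge_of_tendsto' hlim hbd

lemma tele_setIntegral {μ : Measure ℝ} {F : ℝ → ℝ}
    (hF : ∀ a b : ℝ, IntegrableOn F (Set.Ioc a b) μ) {v : ℕ → ℝ}
    (hv : ∀ k, v k ≤ v (k+1)) (j : ℕ) :
    ∫ s in Set.Ioc (v 0) (v j), F s ∂μ
      = ∑ k ∈ Finset.range j, ∫ s in Set.Ioc (v k) (v (k+1)), F s ∂μ := by
  induction j with
  | zero => simp
  | succ j ih =>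
    have hmono : Monotone v := monotone_nat_of_le_succ hv
    rw [Finset.sum_range_succ, ← ih,
      ← MeasureTheory.setIntegral_union (Set.Ioc_disjoint_Ioc_of_le le_rfl) measurableSet_Ioc
        (hF _ _) (hF _ _),
      Set.Ioc_union_Ioc_eq_Ioc (hmono (Nat.zero_le j)) (hv j)]

lemma impact_repr {T : ℝ} (hT : 0 < T) {h α : ℝ → ℝ} {Lh : NNReal}
    (hh : LipschitzWith Lh h) (hα : ContinuousOn α (Set.Icc 0 T))
    {y₀ : ℝ} {Θ' Y' : ℝ → ℝ} (hsol : ImpactSol T h α y₀ Θ' Y') :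
    ∃ (F : ℝ → ℝ) (C : ℝ), Measurable F ∧ 0 ≤ C ∧ (∀ s, |F s| ≤ C) ∧
      (∀ a b : ℝ, IntervalIntegrable F volume a b) ∧
      Continuous (fun u => ∫ s in (0:ℝ)..u, F s) ∧
      (∀ s ∈ Set.Icc (0:ℝ) T, F s = h (Y' s) * α s) ∧
      (∀ u ∈ Set.Icc (0:ℝ) T, Y' u = y₀ + (Θ' u - Θ' 0) - ∫ s in (0:ℝ)..u, F s) := by
  set ρ : ℝ → ℝ := fun s => max 0 (min s T) with hρ
  have hρcont : Continuous ρ := continuous_const.max ((continuous_id).min continuous_const)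
  have hρmem : ∀ s, ρ s ∈ Set.Icc (0:ℝ) T :=
    fun s => ⟨le_max_left _ _, max_le hT.le (min_le_right _ _)⟩
  have hρid : ∀ s ∈ Set.Icc (0:ℝ) T, ρ s = s := by
    intro s hs
    simp only [hρ]
    rw [min_eq_left hs.2, max_eq_right hs.1]
  set F : ℝ → ℝ := fun s => h (Y' (ρ s)) * α (ρ s) with hF
  obtain ⟨MY, hMY0, hMYb⟩ := cadlag_bounded hT hsol.1
  obtain ⟨Cα, hCα⟩ := isCompact_Icc.exists_bound_of_continuousOn hα
  have hCα0 : 0 ≤ Cα := le_trans (norm_nonneg _) (hCα 0 ⟨le_refl 0, hT.le⟩)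
  have hhb : ∀ a : ℝ, |h a| ≤ |h 0| + (Lh : ℝ) * |a| := by
    intro a
    have h1 := hh.dist_le_mul a 0
    rw [Real.dist_eq, Real.dist_eq, sub_zero] at h1
    have h4 := abs_sub_abs_le_abs_sub (h a) (h 0)
    linarith
  set C : ℝ := (|h 0| + (Lh : ℝ) * MY) * Cα with hC
  have hC0 : 0 ≤ C := mul_nonneg (by positivity) hCα0
  have hCb : ∀ s, |F s| ≤ C := by
    intro s
    rw [hF]
    simp only
    rw [abs_mul]
    apply mul_le_mul _ _ (abs_nonneg _) (by positivity)
    · refine le_trans (hhb _) ?_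
      have := hMYb (ρ s) (hρmem s)
      have hLh : (0:ℝ) ≤ (Lh : ℝ) := Lh.2
      nlinarith
    · rw [← Real.norm_eq_abs]
      exact hCα _ (hρmem s)
  have hYm : Measurable (fun s => Y' (ρ s)) := clamp_measurable hT hsol.1
  have hFm : Measurable F := by
    apply Measurable.mul
    · exact hh.continuous.measurable.comp hYm
    · exact (hα.comp_continuous hρcont hρmem).measurable
  have hFint : ∀ a b : ℝ, IntervalIntegrable F volume a b :=
    intervalIntegrable_of_bounded_meas hFm C hCb
  have hIcont : Continuous (fun u => ∫ s in (0:ℝ)..u, F s) :=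
    intervalIntegral.continuous_primitive hFint 0
  refine ⟨F, C, hFm, hC0, hCb, hFint, hIcont, ?_, ?_⟩
  · intro s hs
    rw [hF]
    simp only
    rw [hρid s hs]
  · intro u hu
    rw [hsol.2 u hu]
    congr 1
    apply intervalIntegral.integral_congr
    intro s hs
    rw [Set.uIcc_of_le hu.1] at hs
    have hsmem : s ∈ Set.Icc (0:ℝ) T := ⟨hs.1, hs.2.trans hu.2⟩
    rw [hF]
    simp only
    rw [hρid s hsmem]


set_option maxHeartbeats 2000000 in
/-- the (pathwise) proceeds of simple strategies approximating a continuous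
finite-variation strategy `Θ = p − q`, computed with any execution prices `ξⁿ_k` between
the natural block-trade bounds, converge uniformly on `[0,T]` to the Riemann–Stieltjes
proceeds `∫_{(0,t]} g(S̄,Y) dμ_p − ∫_{(0,t]} g(S̄,Y) dμ_q` of the limit strategy. -/
theorem simple_strategy_proceeds_converge
    (T : ℝ) (hT : 0 < T) (h α : ℝ → ℝ) (Lh : NNReal)
    (hh : LipschitzWith Lh h) (hα : ContinuousOn α (Set.Icc 0 T))
    (y₀ c : ℝ) (hc : 0 ≤ c)
    (Sbar : ℝ → ℝ) (hS : Cadlag T Sbar)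
    (g : ℝ → ℝ → ℝ) (hg : Continuous fun pt : ℝ × ℝ => g pt.1 pt.2)
    (hgLip : ∀ K : Set ℝ, IsCompact K → ∃ LK : ℝ, 0 ≤ LK ∧
      ∀ x ∈ K, ∀ y ∈ K, ∀ z ∈ K, |g x y - g x z| ≤ LK * |y - z|)
    (p q : StieltjesFunction ℝ) (hp : Continuous (p : ℝ → ℝ)) (hq : Continuous (q : ℝ → ℝ))
    (Θ : ℝ → ℝ) (hΘdef : ∀ s, Θ s = p s - q s)
    (Y : ℝ → ℝ) (hY : ImpactSol T h α y₀ Θ Y)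
    (m : ℕ → ℕ) (hm : ∀ n, 1 ≤ m n)
    (t : ℕ → ℕ → ℝ)
    (ht0 : ∀ n, t n 0 = 0) (htT : ∀ n, t n (m n) = T)
    (htmono : ∀ n, ∀ k < m n, t n k < t n (k + 1))
    (hmesh : ∀ ε > (0:ℝ), ∃ N : ℕ, ∀ n ≥ N, ∀ k < m n, t n (k + 1) - t n k ≤ ε)
    (Θn : ℕ → ℝ → ℝ)
    (hΘn : ∀ n s, Θn n s = Θ 0 + ∑ k ∈ Finset.range (m n),
      (Θ (t n (k + 1)) - Θ (t n k)) * (if t n (k + 1) ≤ s then 1 else 0))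
    (Yn : ℕ → ℝ → ℝ) (hYn : ∀ n, ImpactSol T h α y₀ (Θn n) (Yn n))
    (ξ : ℕ → ℕ → ℝ)
    (hξ : ∀ n, ∀ k < m n, ξ n (k + 1) ∈ Set.uIcc
      (g (Sbar (t n (k + 1))) (leftVal (Yn n) (t n (k + 1))))
      (g (Sbar (t n (k + 1)))
        (leftVal (Yn n) (t n (k + 1)) + c * (Θ (t n (k + 1)) - Θ (t n k))))) :
    ∀ ε > (0:ℝ), ∃ N : ℕ, ∀ n ≥ N, ∀ u ∈ Set.Icc (0:ℝ) T,
      |(∑ k ∈ Finset.range (m n),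
          (if t n (k + 1) ≤ u then ξ n (k + 1) * (Θ (t n (k + 1)) - Θ (t n k)) else 0))
        - ((∫ s in Set.Ioc (0:ℝ) u, g (Sbar s) (Y s) ∂p.measure)
          - ∫ s in Set.Ioc (0:ℝ) u, g (Sbar s) (Y s) ∂q.measure)| ≤ ε := by
  intro ε hε
  classical
  -- clamp
  set ρ : ℝ → ℝ := fun s => max 0 (min s T) with hρ
  have hρcont : Continuous ρ := continuous_const.max ((continuous_id).min continuous_const)
  have hρmem : ∀ s, ρ s ∈ Set.Icc (0:ℝ) T :=
    fun s => ⟨le_max_left _ _, max_le hT.le (min_le_right _ _)⟩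
  have hρid : ∀ s ∈ Set.Icc (0:ℝ) T, ρ s = s := by
    intro s hs
    simp only [hρ]
    rw [min_eq_left hs.2, max_eq_right hs.1]
  have hΘc : Continuous Θ := by
    have : Θ = fun s => p s - q s := funext hΘdef
    rw [this]; exact hp.sub hq
  -- partition basics
  have htmono' : ∀ n : ℕ, ∀ j : ℕ, j ≤ m n → ∀ i : ℕ, i ≤ j → t n i ≤ t n j := by
    intro n j
    induction j with
    | zero => intro _ i hi; rw [Nat.le_zero.mp hi]
    | succ j ih =>
      intro hj i hi
      rcases Nat.lt_or_ge i (j+1) with hlt | hge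
      · exact le_trans (ih (le_trans (Nat.le_succ j) hj) i (Nat.lt_succ_iff.mp hlt))
          (htmono n j (Nat.lt_of_succ_le hj)).le
      · rw [le_antisymm hi hge]
  have htmem : ∀ n, ∀ k, k ≤ m n → t n k ∈ Set.Icc (0:ℝ) T := by
    intro n k hk
    constructor
    · rw [← ht0 n]; exact htmono' n k hk 0 (Nat.zero_le k)
    · rw [← htT n]; exact htmono' n (m n) le_rfl k hk
  have htpos : ∀ n, ∀ k, k < m n → 0 < t n (k+1) := by
    intro n k hk
    calc (0:ℝ) = t n 0 := (ht0 n).symm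
      _ ≤ t n k := htmono' n k hk.le 0 (Nat.zero_le k)
      _ < t n (k+1) := htmono n k hk
  -- step function value
  have hstep : ∀ n j, j ≤ m n → ∀ s : ℝ, t n j ≤ s → (j = m n ∨ s < t n (j+1)) →
      Θn n s = Θ (t n j) := by
    intro n j hj s hjs hdisj
    rw [hΘn n s]
    have hterm : ∀ k ∈ Finset.range (m n),
        (Θ (t n (k+1)) - Θ (t n k)) * (if t n (k+1) ≤ s then 1 else 0)
          = (if k < j then Θ (t n (k+1)) - Θ (t n k) else 0) := by
      intro k hk
      rw [Finset.mem_range] at hk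
      by_cases hkj : k < j
      · have h1 : t n (k+1) ≤ s :=
          le_trans (htmono' n j hj (k+1) (Nat.succ_le_of_lt hkj)) hjs
        simp [h1, hkj]
      · have h1 : ¬ (t n (k+1) ≤ s) := by
          rcases hdisj with rfl | hlt
          · exact absurd hk hkj
          · push_neg at hkj
            have h2 : t n (j+1) ≤ t n (k+1) :=
              htmono' n (k+1) (Nat.succ_le_of_lt hk) (j+1) (Nat.succ_le_succ hkj)
            exact not_le.mpr (lt_of_lt_of_le hlt h2)
        simp [h1, hkj]
    rw [Finset.sum_congr rfl hterm]
    have hsum : ∑ k ∈ Finset.range (m n), (if k < j then Θ (t n (k+1)) - Θ (t n k) else 0)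
        = ∑ k ∈ Finset.range j, (Θ (t n (k+1)) - Θ (t n k)) := by
      rw [← Finset.sum_subset (Finset.range_subset_range.mpr hj) (fun k _ hnk =>
        if_neg (by simpa using hnk))]
      exact Finset.sum_congr rfl (fun k hk => if_pos (Finset.mem_range.mp hk))
    rw [hsum, Finset.sum_range_sub (fun k => Θ (t n k)), ht0 n]
    ring
  have hΘn0 : ∀ n, Θn n 0 = Θ 0 := by
    intro n
    rw [hΘn n 0]
    rw [Finset.sum_eq_zero, add_zero]
    intro k hk
    rw [if_neg (not_le.mpr (htpos n k (Finset.mem_range.mp hk))), mul_zero]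
  -- locating indices
  have hlocate : ∀ n, ∀ s : ℝ, 0 ≤ s → ∃ j : ℕ, j ≤ m n ∧ t n j ≤ s ∧
      (j = m n ∨ s < t n (j+1)) := by
    intro n s hs
    set P : ℕ → Prop := fun i => t n i ≤ s with hP
    have hP0 : P 0 := by rw [hP]; simpa [ht0 n] using hs
    have hPj : P (Nat.findGreatest P (m n)) := Nat.findGreatest_spec (Nat.zero_le _) hP0
    refine ⟨Nat.findGreatest P (m n), Nat.findGreatest_le _, hPj, ?_⟩
    by_cases hjm : Nat.findGreatest P (m n) = m n
    · exact Or.inl hjm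
    · right
      have hjlt : Nat.findGreatest P (m n) < m n :=
        lt_of_le_of_ne (Nat.findGreatest_le _) hjm
      have := Nat.findGreatest_is_greatest (Nat.lt_succ_self _) (Nat.succ_le_of_lt hjlt)
      exact not_le.mp this
  have hpiece : ∀ n, ∀ s : ℝ, 0 < s → s ≤ T → ∃ k, k < m n ∧ t n k < s ∧ s ≤ t n (k+1) := by
    intro n s hs0 hsT
    set P : ℕ → Prop := fun i => t n i < s with hP
    have hP0 : P 0 := by rw [hP]; simpa [ht0 n] using hs0
    have hPk : P (Nat.findGreatest P (m n)) := Nat.findGreatest_spec (Nat.zero_le _) hP0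
    have hkm : Nat.findGreatest P (m n) ≤ m n := Nat.findGreatest_le _
    have hkm' : Nat.findGreatest P (m n) < m n := by
      rcases lt_or_eq_of_le hkm with h1 | h1
      · exact h1
      · exfalso
        have hPk' : t n (m n) < s := by rw [← h1]; exact hPk
        rw [htT n] at hPk'
        exact absurd hPk' (not_lt.mpr hsT)
    refine ⟨Nat.findGreatest P (m n), hkm', hPk, ?_⟩
    have := Nat.findGreatest_is_greatest (Nat.lt_succ_self _) (Nat.succ_le_of_lt hkm')
    exact not_lt.mp this
  have hunique : ∀ n, ∀ (k k' : ℕ), k < m n → k' < m n → ∀ s : ℝ,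
      t n k < s → s ≤ t n (k+1) → t n k' < s → s ≤ t n (k'+1) → k = k' := by
    intro n k k' hk hk' s h1 h2 h3 h4
    by_contra hne
    rcases Nat.lt_or_ge k k' with hlt | hge
    · have : t n (k+1) ≤ t n k' := htmono' n k' hk'.le (k+1) (Nat.succ_le_of_lt hlt)
      linarith
    · have hlt : k' < k := lt_of_le_of_ne hge (Ne.symm hne)
      have : t n (k'+1) ≤ t n k := htmono' n k hk.le (k'+1) (Nat.succ_le_of_lt hlt)
      linarith
  have huniqIco : ∀ n, ∀ (k k' : ℕ), k < m n → k' < m n → ∀ s : ℝ,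
      t n k ≤ s → s < t n (k+1) → t n k' ≤ s → s < t n (k'+1) → k = k' := by
    intro n k k' hk hk' s h1 h2 h3 h4
    by_contra hne
    rcases Nat.lt_or_ge k k' with hlt | hge
    · have : t n (k+1) ≤ t n k' := htmono' n k' hk'.le (k+1) (Nat.succ_le_of_lt hlt)
      linarith
    · have hlt : k' < k := lt_of_le_of_ne hge (Ne.symm hne)
      have : t n (k'+1) ≤ t n k := htmono' n k hk.le (k'+1) (Nat.succ_le_of_lt hlt)
      linarith
  -- representations
  obtain ⟨F, CF, hFm, hCF0, hCFb, hFint, hIcont, hFeq, hYeq⟩ := impact_repr hT hh hα hY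
  choose Fn CFn hFnm hCFn0 hCFnb hFnint hIncont hFneq hYneq using
    fun n => impact_repr hT hh hα (hYn n)
  have hYcont : ContinuousOn Y (Set.Icc 0 T) := by
    have hc1 : ContinuousOn (fun u => y₀ + (Θ u - Θ 0) - ∫ s in (0:ℝ)..u, F s)
        (Set.Icc 0 T) :=
      ((continuous_const.add (hΘc.sub continuous_const)).sub hIcont).continuousOn
    exact hc1.congr hYeq
  set Y' : ℝ → ℝ := fun s => Y (ρ s) with hY'
  have hY'cont : Continuous Y' := hYcont.comp_continuous hρcont hρmem
  set S' : ℝ → ℝ := fun s => Sbar (ρ s) with hS'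
  have hS'm : Measurable S' := clamp_measurable hT hS
  obtain ⟨MS, hMS0, hMSb⟩ := cadlag_bounded hT hS
  obtain ⟨MY0, hMY00, hMYb⟩ := cadlag_bounded hT hY.1
  obtain ⟨Mθ, hMθ⟩ := isCompact_Icc.exists_bound_of_continuousOn hΘc.continuousOn
  have hMθ0 : (0:ℝ) ≤ Mθ := le_trans (norm_nonneg _) (hMθ 0 ⟨le_refl 0, hT.le⟩)
  have hY'b : ∀ s, |Y' s| ≤ MY0 := fun s => hMYb _ (hρmem s)
  have hS'b : ∀ s, |S' s| ≤ MS := fun s => hMSb _ (hρmem s)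
  -- uniform continuity
  have hUC : ∀ φ : ℝ → ℝ, Continuous φ → ∀ γ : ℝ, 0 < γ → ∃ δ : ℝ, 0 < δ ∧
      ∀ a ∈ Set.Icc (0:ℝ) T, ∀ b ∈ Set.Icc (0:ℝ) T, |a - b| ≤ δ → |φ a - φ b| ≤ γ := by
    intro φ hφ γ hγ
    have h1 := isCompact_Icc.uniformContinuousOn_of_continuous
      (s := Set.Icc (0:ℝ) T) hφ.continuousOn
    rw [Metric.uniformContinuousOn_iff_le] at h1
    obtain ⟨δ, hδ0, hδ⟩ := h1 γ hγ
    exact ⟨δ, hδ0, fun a ha b hb hab => by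
      have := hδ a ha b hb (by rwa [Real.dist_eq]); rwa [Real.dist_eq] at this⟩
  -- compact box and g constants
  set R : ℝ := MS + MY0 + 1 + 2*Mθ + 2*c*Mθ + 1 with hR
  have hcθ : 0 ≤ 2*c*Mθ := by positivity
  have hR0 : 0 < R := by rw [hR]; linarith
  obtain ⟨Lg, hLg0, hLgLip⟩ := hgLip (Set.Icc (-R) R) isCompact_Icc
  obtain ⟨Mg, hMgb⟩ := (isCompact_Icc.prod isCompact_Icc :
    IsCompact (Set.Icc (-R) R ×ˢ Set.Icc (-R) R)).exists_bound_of_continuousOn hg.continuousOn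
  have hgK : ∀ x y : ℝ, |x| ≤ R → |y| ≤ R → |g x y| ≤ Mg := by
    intro x y hx hy
    have := hMgb (x, y) (Set.mk_mem_prod ⟨(abs_le.mp hx).1, (abs_le.mp hx).2⟩
      ⟨(abs_le.mp hy).1, (abs_le.mp hy).2⟩)
    rwa [Real.norm_eq_abs] at this
  have hMg0 : 0 ≤ Mg := le_trans (abs_nonneg _) (hgK 0 0 (by simpa using hR0.le)
    (by simpa using hR0.le))
  have hgLip' : ∀ x y z : ℝ, |x| ≤ R → |y| ≤ R → |z| ≤ R →
      |g x y - g x z| ≤ Lg * |y - z| := by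
    intro x y z hx hy hz
    exact hLgLip x ⟨(abs_le.mp hx).1, (abs_le.mp hx).2⟩ y ⟨(abs_le.mp hy).1, (abs_le.mp hy).2⟩
      z ⟨(abs_le.mp hz).1, (abs_le.mp hz).2⟩
  have hS'R : ∀ s, |S' s| ≤ R := fun s => le_trans (hS'b s) (by rw [hR]; linarith)
  have hY'R : ∀ s, |Y' s| ≤ R := fun s => le_trans (hY'b s) (by rw [hR]; linarith)
  set f' : ℝ → ℝ := fun s => g (S' s) (Y' s) with hf'
  have hf'm : Measurable f' := hg.measurable.comp (hS'm.prodMk hY'cont.measurable)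
  have hf'b : ∀ s, |f' s| ≤ Mg := fun s => hgK _ _ (hS'R s) (hY'R s)
  -- measure facts
  have hpfin : ∀ a b : ℝ, p.measure (Set.Ioc a b) ≠ ⊤ := by
    intro a b; rw [StieltjesFunction.measure_Ioc]; exact ENNReal.ofReal_ne_top
  have hqfin : ∀ a b : ℝ, q.measure (Set.Ioc a b) ≠ ⊤ := by
    intro a b; rw [StieltjesFunction.measure_Ioc]; exact ENNReal.ofReal_ne_top
  have hpval : ∀ a b : ℝ, a ≤ b → (p.measure (Set.Ioc a b)).toReal = p b - p a := by
    intro a b hab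
    rw [StieltjesFunction.measure_Ioc, ENNReal.toReal_ofReal (sub_nonneg.mpr (p.mono hab))]
  have hqval : ∀ a b : ℝ, a ≤ b → (q.measure (Set.Ioc a b)).toReal = q b - q a := by
    intro a b hab
    rw [StieltjesFunction.measure_Ioc, ENNReal.toReal_ofReal (sub_nonneg.mpr (q.mono hab))]
  have hf'intp : ∀ a b : ℝ, IntegrableOn f' (Set.Ioc a b) p.measure :=
    fun a b => integrableOn_of_bounded'' (hpfin a b) hf'm Mg hf'b
  have hf'intq : ∀ a b : ℝ, IntegrableOn f' (Set.Ioc a b) q.measure :=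
    fun a b => integrableOn_of_bounded'' (hqfin a b) hf'm Mg hf'b
  -- b functions
  set bf : ℕ → ℕ → ℝ → ℝ := fun n k s => |g (S' (t n (k+1))) (Y' s) - g (S' s) (Y' s)| with hbf
  have hbfm : ∀ n k, Measurable (bf n k) := by
    intro n k
    exact ((hg.comp (continuous_const.prodMk hY'cont)).measurable.sub hf'm).abs
  have hbfb : ∀ n k s, |bf n k s| ≤ 2*Mg := by
    intro n k s
    rw [hbf]; simp only [abs_abs]
    calc |g (S' (t n (k+1))) (Y' s) - g (S' s) (Y' s)|
        ≤ |g (S' (t n (k+1))) (Y' s)| + |g (S' s) (Y' s)| := abs_sub _ _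
      _ ≤ Mg + Mg := add_le_add (hgK _ _ (hS'R _) (hY'R _)) (hgK _ _ (hS'R _) (hY'R _))
      _ = 2*Mg := by ring
  have hbfnn : ∀ n k s, 0 ≤ bf n k s := fun n k s => abs_nonneg _
  have hbintp : ∀ n k (a b : ℝ), IntegrableOn (bf n k) (Set.Ioc a b) p.measure :=
    fun n k a b => integrableOn_of_bounded'' (hpfin a b) (hbfm n k) (2*Mg) (hbfb n k)
  have hbintq : ∀ n k (a b : ℝ), IntegrableOn (bf n k) (Set.Ioc a b) q.measure :=
    fun n k a b => integrableOn_of_bounded'' (hqfin a b) (hbfm n k) (2*Mg) (hbfb n k)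
  -- convergence of Yn to Y
  have hYnconv : ∀ γ : ℝ, 0 < γ → ∃ N : ℕ, ∀ n ≥ N, ∀ s ∈ Set.Icc (0:ℝ) T,
      |Yn n s - Y s| ≤ γ := by
    intro γ hγ
    obtain ⟨Cα, hCα⟩ := isCompact_Icc.exists_bound_of_continuousOn hα
    have hCα0 : 0 ≤ Cα := le_trans (norm_nonneg _) (hCα 0 ⟨le_refl 0, hT.le⟩)
    set K : ℝ := (Lh : ℝ) * Cα with hKdef
    have hK0 : 0 ≤ K := mul_nonneg Lh.2 hCα0
    have hexp : 0 < Real.exp (K * T) := Real.exp_pos _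
    set γ' : ℝ := γ / Real.exp (K * T) with hγ'def
    have hγ'0 : 0 < γ' := div_pos hγ hexp
    obtain ⟨δ, hδ0, hδ⟩ := hUC Θ hΘc γ' hγ'0
    obtain ⟨N, hN⟩ := hmesh δ hδ0
    refine ⟨N, fun n hn s hs => ?_⟩
    have hΘnd : ∀ r ∈ Set.Icc (0:ℝ) T, |Θn n r - Θ r| ≤ γ' := by
      intro r hr
      obtain ⟨j, hj, hjr, hdisj⟩ := hlocate n r hr.1
      rw [hstep n j hj r hjr hdisj]
      rcases eq_or_lt_of_le hj with rfl | hjlt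
      · have hrT : r = T := le_antisymm hr.2 (by rwa [htT n] at hjr)
        rw [htT n, hrT, sub_self, abs_zero]
        exact hγ'0.le
      · have hlt : r < t n (j+1) := by
          rcases hdisj with h1 | h1
          · exact absurd h1 (Nat.ne_of_lt hjlt)
          · exact h1
        apply hδ (t n j) (htmem n j hj) r hr
        rw [abs_sub_comm, abs_of_nonneg (sub_nonneg.mpr hjr)]
        have := hN n hn j hjlt
        linarith
    set e : ℝ → ℝ := fun r => |Yn n (ρ r) - Y (ρ r)| with he
    obtain ⟨MYn, hMYn0, hMYnb⟩ := cadlag_bounded hT (hYn n).1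
    have hem : Measurable e :=
      ((clamp_measurable hT (hYn n).1).sub (clamp_measurable hT hY.1)).abs
    have he0 : ∀ r, 0 ≤ e r := fun r => abs_nonneg _
    have heM : ∀ r, e r ≤ MYn + MY0 := by
      intro r
      rw [he]; simp only
      rw [sub_eq_add_neg]
      refine le_trans (abs_add_le _ _) ?_
      rw [abs_neg]
      exact add_le_add (hMYnb _ (hρmem r)) (hMYb _ (hρmem r))
    have heabs : ∀ r, |e r| ≤ MYn + MY0 :=
      fun r => abs_le.mpr ⟨by linarith [he0 r, heM r], heM r⟩
    have hineq : ∀ r ∈ Set.Icc (0:ℝ) T, e r ≤ γ' + K * ∫ w in (0:ℝ)..r, e w := by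
      intro r hr
      have hρr : ρ r = r := hρid r hr
      have hsub : Yn n r - Y r = (Θn n r - Θ r) - ∫ w in (0:ℝ)..r, (Fn n w - F w) := by
        rw [hYneq n r hr, hYeq r hr,
          intervalIntegral.integral_sub (hFnint n 0 r) (hFint 0 r), hΘn0 n]
        ring
      have habs1 : |∫ w in (0:ℝ)..r, (Fn n w - F w)| ≤ ∫ w in (0:ℝ)..r, K * e w := by
        refine le_trans (intervalIntegral.abs_integral_le_integral_abs hr.1) ?_
        apply intervalIntegral.integral_mono_on hr.1
        · exact ((hFnint n 0 r).sub (hFint 0 r)).abs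
        · exact (intervalIntegrable_of_bounded_meas hem (MYn + MY0) heabs 0 r).const_mul K
        · intro w hw
          have hwmem : w ∈ Set.Icc (0:ℝ) T := ⟨hw.1, hw.2.trans hr.2⟩
          rw [hFneq n w hwmem, hFeq w hwmem]
          have h8 : h (Yn n w) * α w - h (Y w) * α w = (h (Yn n w) - h (Y w)) * α w := by
            ring
          rw [h8, abs_mul]
          have h5 := hh.dist_le_mul (Yn n w) (Y w)
          rw [Real.dist_eq, Real.dist_eq] at h5
          have h6 : |α w| ≤ Cα := by rw [← Real.norm_eq_abs]; exact hCα w hwmem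
          have h7 : e w = |Yn n w - Y w| := by rw [he]; simp only; rw [hρid w hwmem]
          calc |h (Yn n w) - h (Y w)| * |α w| ≤ ((Lh:ℝ) * |Yn n w - Y w|) * Cα :=
                mul_le_mul h5 h6 (abs_nonneg _) (by positivity)
            _ = K * e w := by rw [h7, hKdef]; ring
      calc e r = |Yn n r - Y r| := by rw [he]; simp only; rw [hρr]
        _ = |(Θn n r - Θ r) - ∫ w in (0:ℝ)..r, (Fn n w - F w)| := by rw [hsub]
        _ ≤ |Θn n r - Θ r| + |∫ w in (0:ℝ)..r, (Fn n w - F w)| := by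
            rw [sub_eq_add_neg]
            refine le_trans (abs_add_le _ _) ?_
            rw [abs_neg]
        _ ≤ γ' + ∫ w in (0:ℝ)..r, K * e w := add_le_add (hΘnd r hr) habs1
        _ = γ' + K * ∫ w in (0:ℝ)..r, e w := by
            rw [intervalIntegral.integral_const_mul]
    have hconc := gronwall_int hK0 hγ'0.le hT.le hem he0 heM hineq s hs
    have hγeq : γ' * Real.exp (K * T) = γ := by
      rw [hγ'def, div_mul_cancel₀ _ hexp.ne']
    rw [hγeq] at hconc
    calc |Yn n s - Y s| = e s := by rw [he]; simp only; rw [hρid s hs]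
      _ ≤ γ := hconc
  -- leftVal formula
  have hleft : ∀ n, ∀ k, k < m n →
      leftVal (Yn n) (t n (k+1)) = Yn n (t n (k+1)) - (Θ (t n (k+1)) - Θ (t n k)) := by
    intro n k hk
    have ht'pos : 0 < t n (k+1) := htpos n k hk
    have ht'mem : t n (k+1) ∈ Set.Icc (0:ℝ) T := htmem n (k+1) (Nat.succ_le_of_lt hk)
    have htkmem : t n k ∈ Set.Icc (0:ℝ) T := htmem n k hk.le
    have htklt : t n k < t n (k+1) := htmono n k hk
    rw [leftVal, if_neg (not_le.mpr ht'pos)]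
    have hIn : Filter.Tendsto (fun w => ∫ s in (0:ℝ)..w, Fn n s)
        (nhdsWithin (t n (k+1)) (Set.Iio (t n (k+1))))
        (nhds (∫ s in (0:ℝ)..(t n (k+1)), Fn n s)) :=
      ((hIncont n).tendsto (t n (k+1))).mono_left nhdsWithin_le_nhds
    have hmain : Filter.Tendsto (Yn n) (nhdsWithin (t n (k+1)) (Set.Iio (t n (k+1))))
        (nhds (y₀ + (Θ (t n k) - Θ 0) - ∫ s in (0:ℝ)..(t n (k+1)), Fn n s)) := by
      have hflt : Filter.Tendsto
          (fun w => y₀ + (Θ (t n k) - Θ 0) - ∫ s in (0:ℝ)..w, Fn n s)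
          (nhdsWithin (t n (k+1)) (Set.Iio (t n (k+1))))
          (nhds (y₀ + (Θ (t n k) - Θ 0) - ∫ s in (0:ℝ)..(t n (k+1)), Fn n s)) :=
        tendsto_const_nhds.sub hIn
      refine hflt.congr' ?_
      rw [← nhdsWithin_Ioo_eq_nhdsLT htklt]
      filter_upwards [self_mem_nhdsWithin] with s hsmem
      have hs : s ∈ Set.Icc (0:ℝ) T :=
        ⟨le_trans htkmem.1 hsmem.1.le, le_trans hsmem.2.le ht'mem.2⟩
      rw [hYneq n s hs, hΘn0 n, hstep n k hk.le s hsmem.1.le (Or.inr hsmem.2)]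
    have hne : nhdsWithin (t n (k+1)) (Set.Iio (t n (k+1))) ≠ ⊥ :=
      Filter.NeBot.ne inferInstance
    rw [leftLim_eq_of_tendsto (h := ⟨hne⟩) hmain]
    have hdisj : k+1 = m n ∨ t n (k+1) < t n (k+2) := by
      by_cases h1 : k+1 = m n
      · exact Or.inl h1
      · exact Or.inr (htmono n (k+1)
          (lt_of_le_of_ne (Nat.succ_le_of_lt hk) h1))
    have hYnval : Yn n (t n (k+1))
        = y₀ + (Θ (t n (k+1)) - Θ 0) - ∫ s in (0:ℝ)..(t n (k+1)), Fn n s := by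
      rw [hYneq n (t n (k+1)) ht'mem, hΘn0 n,
        hstep n (k+1) (Nat.succ_le_of_lt hk) (t n (k+1)) le_rfl hdisj]
    rw [hYnval]
    ring
  -- B term
  have hBterm : ∃ N : ℕ, ∀ n ≥ N,
      (∑ k ∈ Finset.range (m n), (∫ s in Set.Ioc (t n k) (t n (k+1)), bf n k s ∂p.measure))
      + (∑ k ∈ Finset.range (m n), (∫ s in Set.Ioc (t n k) (t n (k+1)), bf n k s ∂q.measure))
      ≤ ε/3 := by
    set β : ℕ → ℝ → ℝ := fun n s => ∑ k ∈ Finset.range (m n),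
      Set.indicator (Set.Ioc (t n k) (t n (k+1))) (bf n k) s with hβ
    have hβm : ∀ n, Measurable (β n) := by
      intro n
      apply Finset.measurable_sum
      intro k _
      exact (hbfm n k).indicator measurableSet_Ioc
    have hβnn : ∀ n s, 0 ≤ β n s := by
      intro n s
      apply Finset.sum_nonneg
      intro k _
      exact Set.indicator_nonneg (fun x _ => hbfnn n k x) s
    have hβeval2 : ∀ n s k, k < m n → s ∈ Set.Ioc (t n k) (t n (k+1)) → β n s = bf n k s := by
      intro n s k hk hmem
      rw [hβ]; simp only
      rw [Finset.sum_eq_single_of_mem k (Finset.mem_range.mpr hk)]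
      · exact Set.indicator_of_mem hmem _
      · intro j hj hjk
        apply Set.indicator_of_notMem
        intro hmem'
        exact hjk (hunique n j k (Finset.mem_range.mp hj) hk s hmem'.1 hmem'.2 hmem.1 hmem.2)
    have hβbd : ∀ n s, |β n s| ≤ 2*Mg := by
      intro n s
      rw [abs_of_nonneg (hβnn n s)]
      by_cases hex : ∃ k, k < m n ∧ s ∈ Set.Ioc (t n k) (t n (k+1))
      · obtain ⟨k, hk, hmem⟩ := hex
        rw [hβeval2 n s k hk hmem]
        exact le_trans (le_abs_self _) (hbfb n k s)
      · push_neg at hex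
        rw [hβ]; simp only
        rw [Finset.sum_eq_zero]
        · positivity
        · intro k hk
          exact Set.indicator_of_notMem (hex k (Finset.mem_range.mp hk)) _
    have hptw : ∀ s ∈ Set.Ioc (0:ℝ) T, Filter.Tendsto (fun n => β n s) atTop (nhds 0) := by
      intro s hsm
      rw [Metric.tendsto_atTop]
      intro γ hγ
      by_cases hsT : s = T
      · refine ⟨0, fun n _ => ?_⟩
        have hz : β n s = 0 := by
          obtain ⟨k, hk, hk1, hk2⟩ := hpiece n s hsm.1 hsm.2
          rw [hβeval2 n s k hk ⟨hk1, hk2⟩]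
          have hTeq : t n (k+1) = T :=
            le_antisymm (htmem n (k+1) (Nat.succ_le_of_lt hk)).2 (hsT ▸ hk2)
          rw [hbf]; simp only
          rw [hTeq, hsT, sub_self, abs_zero]
        rw [hz]
        simpa [Real.dist_eq] using hγ
      · have hsT' : s < T := lt_of_le_of_ne hsm.2 hsT
        have hρs : ρ s = s := hρid s ⟨hsm.1.le, hsm.2⟩
        have hSt : Filter.Tendsto S' (nhdsWithin s (Set.Ici s)) (nhds (S' s)) :=
          tendsto_right_clamp hT hS s
        have hgc : Continuous fun x : ℝ => |g x (Y' s) - g (S' s) (Y' s)| :=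
          ((hg.comp (continuous_id.prodMk continuous_const)).sub continuous_const).abs
        have hφ : Filter.Tendsto (fun v => |g (S' v) (Y' s) - g (S' s) (Y' s)|)
            (nhdsWithin s (Set.Ici s)) (nhds 0) := by
          have h1 := (hgc.tendsto (S' s)).comp hSt
          simpa [Function.comp_def] using h1
        have hev : {v : ℝ | |g (S' v) (Y' s) - g (S' s) (Y' s)| < γ}
            ∈ nhdsWithin s (Set.Ici s) := hφ (Iio_mem_nhds hγ)
        obtain ⟨w, hw, hsub⟩ := mem_nhdsGE_iff_exists_Ico_subset.mp hev
        have hws : s < w := hw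
        obtain ⟨N, hN⟩ := hmesh (w - s) (by linarith)
        refine ⟨N, fun n hn => ?_⟩
        obtain ⟨k, hk, hk1, hk2⟩ := hpiece n s hsm.1 hsm.2
        rw [Real.dist_eq, hβeval2 n s k hk ⟨hk1, hk2⟩, sub_zero]
        rw [hbf]; simp only [abs_abs]
        have hmesh2 := hN n hn k hk
        exact hsub ⟨hk2, by linarith⟩
    have hfinp : IsFiniteMeasure (p.measure.restrict (Set.Ioc (0:ℝ) T)) :=
      ⟨by rw [Measure.restrict_apply_univ]; exact lt_top_iff_ne_top.mpr (hpfin 0 T)⟩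
    have hfinq : IsFiniteMeasure (q.measure.restrict (Set.Ioc (0:ℝ) T)) :=
      ⟨by rw [Measure.restrict_apply_univ]; exact lt_top_iff_ne_top.mpr (hqfin 0 T)⟩
    have hdctp : Filter.Tendsto (fun n => ∫ s in Set.Ioc (0:ℝ) T, β n s ∂p.measure)
        atTop (nhds 0) := by
      have h1 := MeasureTheory.tendsto_integral_of_dominated_convergence
        (μ := p.measure.restrict (Set.Ioc (0:ℝ) T)) (F := β) (f := fun _ => 0)
        (bound := fun _ => 2*Mg)
        (fun n => (hβm n).aestronglyMeasurable)
        (MeasureTheory.integrable_const _)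
        (fun n => Filter.Eventually.of_forall (fun s => by
          rw [Real.norm_eq_abs]; exact hβbd n s))
        ((MeasureTheory.ae_restrict_iff' measurableSet_Ioc).mpr
          (Filter.Eventually.of_forall hptw))
      simpa using h1
    have hdctq : Filter.Tendsto (fun n => ∫ s in Set.Ioc (0:ℝ) T, β n s ∂q.measure)
        atTop (nhds 0) := by
      have h1 := MeasureTheory.tendsto_integral_of_dominated_convergence
        (μ := q.measure.restrict (Set.Ioc (0:ℝ) T)) (F := β) (f := fun _ => 0)
        (bound := fun _ => 2*Mg)
        (fun n => (hβm n).aestronglyMeasurable)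
        (MeasureTheory.integrable_const _)
        (fun n => Filter.Eventually.of_forall (fun s => by
          rw [Real.norm_eq_abs]; exact hβbd n s))
        ((MeasureTheory.ae_restrict_iff' measurableSet_Ioc).mpr
          (Filter.Eventually.of_forall hptw))
      simpa using h1
    have hBeqp : ∀ n, ∫ s in Set.Ioc (0:ℝ) T, β n s ∂p.measure
        = ∑ k ∈ Finset.range (m n),
          ∫ s in Set.Ioc (t n k) (t n (k+1)), bf n k s ∂p.measure := by
      intro n
      rw [hβ]
      rw [MeasureTheory.integral_finset_sum]
      · apply Finset.sum_congr rfl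
        intro k hk
        rw [MeasureTheory.setIntegral_indicator measurableSet_Ioc,
          Set.inter_eq_right.mpr (Set.Ioc_subset_Ioc
            (htmem n k (Finset.mem_range.mp hk).le).1
            (htmem n (k+1) (Nat.succ_le_of_lt (Finset.mem_range.mp hk))).2)]
      · intro k _
        apply MeasureTheory.Integrable.indicator _ measurableSet_Ioc
        exact integrableOn_of_bounded'' (hpfin 0 T) (hbfm n k) (2*Mg) (hbfb n k)
    have hBeqq : ∀ n, ∫ s in Set.Ioc (0:ℝ) T, β n s ∂q.measure
        = ∑ k ∈ Finset.range (m n),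
          ∫ s in Set.Ioc (t n k) (t n (k+1)), bf n k s ∂q.measure := by
      intro n
      rw [hβ]
      rw [MeasureTheory.integral_finset_sum]
      · apply Finset.sum_congr rfl
        intro k hk
        rw [MeasureTheory.setIntegral_indicator measurableSet_Ioc,
          Set.inter_eq_right.mpr (Set.Ioc_subset_Ioc
            (htmem n k (Finset.mem_range.mp hk).le).1
            (htmem n (k+1) (Nat.succ_le_of_lt (Finset.mem_range.mp hk))).2)]
      · intro k _
        apply MeasureTheory.Integrable.indicator _ measurableSet_Ioc
        exact integrableOn_of_bounded'' (hqfin 0 T) (hbfm n k) (2*Mg) (hbfb n k)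
    have hsum0 : Filter.Tendsto (fun n =>
        (∫ s in Set.Ioc (0:ℝ) T, β n s ∂p.measure)
        + ∫ s in Set.Ioc (0:ℝ) T, β n s ∂q.measure) atTop (nhds 0) := by
      have := hdctp.add hdctq
      simpa using this
    rw [Metric.tendsto_atTop] at hsum0
    obtain ⟨N, hN⟩ := hsum0 (ε/3) (by linarith)
    refine ⟨N, fun n hn => ?_⟩
    have h1 := hN n hn
    rw [Real.dist_eq, sub_zero] at h1
    rw [← hBeqp n, ← hBeqq n]
    exact le_trans (le_abs_self _) h1.le
  -- choose constants
  set V : ℝ := (p T - p 0) + (q T - q 0) with hV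
  have hV0 : 0 ≤ V := add_nonneg (sub_nonneg.mpr (p.mono hT.le)) (sub_nonneg.mpr (q.mono hT.le))
  set ε1 : ℝ := ε / (3 * (V + 1)) with hε1
  have hε10 : 0 < ε1 := div_pos hε (by linarith)
  set ε2 : ℝ := ε1 / ((Lg + 1) * (c + 3)) with hε2
  have hε20 : 0 < ε2 := div_pos hε10 (by nlinarith)
  obtain ⟨δΘ, hδΘ0, hδΘ⟩ := hUC Θ hΘc ε2 hε20
  obtain ⟨δY, hδY0, hδY⟩ := hUC Y' hY'cont ε2 hε20
  set εpq : ℝ := ε / (6 * (Mg + 1)) with hεpq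
  have hεpq0 : 0 < εpq := div_pos hε (by linarith)
  obtain ⟨δp, hδp0, hδp⟩ := hUC p hp εpq hεpq0
  obtain ⟨δq, hδq0, hδq⟩ := hUC q hq εpq hεpq0
  obtain ⟨N1, hN1⟩ := hYnconv (min ε2 1) (lt_min hε20 one_pos)
  obtain ⟨N2, hN2⟩ := hmesh (min δΘ δY) (lt_min hδΘ0 hδY0)
  obtain ⟨N3, hN3⟩ := hmesh (min δp δq) (lt_min hδp0 hδq0)
  obtain ⟨N4, hN4⟩ := hBterm
  refine ⟨max (max N1 N2) (max N3 N4), fun n hn u hu => ?_⟩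
  have hn1 : N1 ≤ n := le_trans (le_trans (le_max_left _ _) (le_max_left _ _)) hn
  have hn2 : N2 ≤ n := le_trans (le_trans (le_max_right _ _) (le_max_left _ _)) hn
  have hn3 : N3 ≤ n := le_trans (le_trans (le_max_left _ _) (le_max_right _ _)) hn
  have hn4 : N4 ≤ n := le_trans (le_trans (le_max_right _ _) (le_max_right _ _)) hn
  -- the key pointwise claim
  have hclaim : ∀ k, k < m n → ∀ s ∈ Set.Ioc (t n k) (t n (k+1)),
      |ξ n (k+1) - f' s| ≤ ε1 + bf n k s := by
    intro k hk s hsmem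
    have ht'mem : t n (k+1) ∈ Set.Icc (0:ℝ) T := htmem n (k+1) (Nat.succ_le_of_lt hk)
    have htkmem : t n k ∈ Set.Icc (0:ℝ) T := htmem n k hk.le
    have htklt : t n k < t n (k+1) := htmono n k hk
    have hsIcc : s ∈ Set.Icc (0:ℝ) T := ⟨le_trans htkmem.1 hsmem.1.le,
      le_trans hsmem.2 ht'mem.2⟩
    have hmesh2 : t n (k+1) - t n k ≤ min δΘ δY := hN2 n hn2 k hk
    have hΔ : |Θ (t n (k+1)) - Θ (t n k)| ≤ ε2 := by
      apply hδΘ (t n (k+1)) ht'mem (t n k) htkmem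
      rw [abs_of_nonneg (sub_nonneg.mpr htklt.le)]
      exact le_trans hmesh2 (min_le_left _ _)
    have hEn : |Yn n (t n (k+1)) - Y (t n (k+1))| ≤ min ε2 1 := hN1 n hn1 (t n (k+1)) ht'mem
    have hY'eq : ∀ r ∈ Set.Icc (0:ℝ) T, Y' r = Y r := by
      intro r hr; rw [hY']; simp only; rw [hρid r hr]
    have hYsd : |Y (t n (k+1)) - Y s| ≤ ε2 := by
      have h1 := hδY (t n (k+1)) ht'mem s hsIcc (by
        rw [abs_of_nonneg (sub_nonneg.mpr hsmem.2)]
        have : t n (k+1) - s ≤ t n (k+1) - t n k := by linarith [hsmem.1]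
        exact le_trans (le_trans this hmesh2) (min_le_right _ _))
      rwa [hY'eq _ ht'mem, hY'eq _ hsIcc] at h1
    have hynval : leftVal (Yn n) (t n (k+1))
        = Yn n (t n (k+1)) - (Θ (t n (k+1)) - Θ (t n k)) := hleft n k hk
    have hYt'b : |Y (t n (k+1))| ≤ MY0 := hMYb _ ht'mem
    have hYnb : |Yn n (t n (k+1))| ≤ MY0 + 1 := by
      have h1 : |Yn n (t n (k+1))|
          ≤ |Yn n (t n (k+1)) - Y (t n (k+1))| + |Y (t n (k+1))| := by
        have h2 := abs_add_le (Yn n (t n (k+1)) - Y (t n (k+1))) (Y (t n (k+1)))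
        rwa [sub_add_cancel] at h2
      have h3 : min ε2 1 ≤ 1 := min_le_right _ _
      linarith [hEn, hYt'b]
    have hθb : |Θ (t n (k+1)) - Θ (t n k)| ≤ 2*Mθ := by
      have h1 : |Θ (t n (k+1))| ≤ Mθ := by
        rw [← Real.norm_eq_abs]; exact hMθ _ ht'mem
      have h2 : |Θ (t n k)| ≤ Mθ := by
        rw [← Real.norm_eq_abs]; exact hMθ _ htkmem
      calc |Θ (t n (k+1)) - Θ (t n k)| ≤ |Θ (t n (k+1))| + |Θ (t n k)| := abs_sub _ _
        _ ≤ 2*Mθ := by linarith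
    have hynR : |leftVal (Yn n) (t n (k+1))| ≤ R := by
      rw [hynval]
      calc |Yn n (t n (k+1)) - (Θ (t n (k+1)) - Θ (t n k))|
          ≤ |Yn n (t n (k+1))| + |Θ (t n (k+1)) - Θ (t n k)| := abs_sub _ _
        _ ≤ (MY0 + 1) + 2*Mθ := add_le_add hYnb hθb
        _ ≤ R := by rw [hR]; linarith
    have hyncR : |leftVal (Yn n) (t n (k+1)) + c * (Θ (t n (k+1)) - Θ (t n k))| ≤ R := by
      calc |leftVal (Yn n) (t n (k+1)) + c * (Θ (t n (k+1)) - Θ (t n k))|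
          ≤ |leftVal (Yn n) (t n (k+1))| + c * |Θ (t n (k+1)) - Θ (t n k)| := by
            refine le_trans (abs_add_le _ _) ?_
            rw [abs_mul, abs_of_nonneg hc]
        _ ≤ ((MY0 + 1) + 2*Mθ) + c * (2*Mθ) := by
            refine add_le_add ?_ (mul_le_mul_of_nonneg_left hθb hc)
            rw [hynval]
            calc |Yn n (t n (k+1)) - (Θ (t n (k+1)) - Θ (t n k))|
                ≤ |Yn n (t n (k+1))| + |Θ (t n (k+1)) - Θ (t n k)| := abs_sub _ _
              _ ≤ (MY0 + 1) + 2*Mθ := add_le_add hYnb hθb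
        _ ≤ R := by rw [hR]; linarith
    have hSt'R : |Sbar (t n (k+1))| ≤ R := by
      have := hMSb _ ht'mem
      rw [hR]; linarith
    have hYsR2 : |Y' s| ≤ R := hY'R s
    have h1 : |ξ n (k+1) - g (Sbar (t n (k+1))) (leftVal (Yn n) (t n (k+1)))|
        ≤ Lg * (c * |Θ (t n (k+1)) - Θ (t n k)|) := by
      refine le_trans (abs_sub_le_of_mem_uIcc' (hξ n k hk)) ?_
      have h2 := hgLip' (Sbar (t n (k+1)))
        (leftVal (Yn n) (t n (k+1)) + c * (Θ (t n (k+1)) - Θ (t n k)))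
        (leftVal (Yn n) (t n (k+1))) hSt'R hyncR hynR
      calc |g (Sbar (t n (k+1))) (leftVal (Yn n) (t n (k+1)) + c * (Θ (t n (k+1)) - Θ (t n k)))
            - g (Sbar (t n (k+1))) (leftVal (Yn n) (t n (k+1)))|
          ≤ Lg * |leftVal (Yn n) (t n (k+1)) + c * (Θ (t n (k+1)) - Θ (t n k))
              - leftVal (Yn n) (t n (k+1))| := h2
        _ = Lg * (c * |Θ (t n (k+1)) - Θ (t n k)|) := by
            rw [add_sub_cancel_left, abs_mul, abs_of_nonneg hc]
    have h2 : |g (Sbar (t n (k+1))) (leftVal (Yn n) (t n (k+1)))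
        - g (Sbar (t n (k+1))) (Y' s)|
        ≤ Lg * |leftVal (Yn n) (t n (k+1)) - Y' s| :=
      hgLip' _ _ _ hSt'R hynR hYsR2
    have h3 : |leftVal (Yn n) (t n (k+1)) - Y' s| ≤ 3 * ε2 := by
      rw [hynval, hY'eq s hsIcc]
      have heq : Yn n (t n (k+1)) - (Θ (t n (k+1)) - Θ (t n k)) - Y s
          = (Yn n (t n (k+1)) - Y (t n (k+1))) + (-(Θ (t n (k+1)) - Θ (t n k)))
            + (Y (t n (k+1)) - Y s) := by ring
      rw [heq]
      have hb1 := abs_add_le ((Yn n (t n (k+1)) - Y (t n (k+1)))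
        + (-(Θ (t n (k+1)) - Θ (t n k)))) (Y (t n (k+1)) - Y s)
      have hb2 := abs_add_le (Yn n (t n (k+1)) - Y (t n (k+1))) (-(Θ (t n (k+1)) - Θ (t n k)))
      rw [abs_neg] at hb2
      have h4 : min ε2 1 ≤ ε2 := min_le_left _ _
      linarith [hEn, hΔ, hYsd]
    have hS'eq2 : S' (t n (k+1)) = Sbar (t n (k+1)) := by
      rw [hS']; simp only; rw [hρid _ ht'mem]
    have hbfval : bf n k s = |g (Sbar (t n (k+1))) (Y' s) - f' s| := by
      rw [hbf, hf']; simp only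
      rw [← hS'eq2]
    have htri : |ξ n (k+1) - f' s| ≤ |ξ n (k+1) - g (Sbar (t n (k+1))) (Y' s)|
        + |g (Sbar (t n (k+1))) (Y' s) - f' s| := abs_sub_le _ _ _
    have htri2 : |ξ n (k+1) - g (Sbar (t n (k+1))) (Y' s)|
        ≤ |ξ n (k+1) - g (Sbar (t n (k+1))) (leftVal (Yn n) (t n (k+1)))|
        + |g (Sbar (t n (k+1))) (leftVal (Yn n) (t n (k+1))) - g (Sbar (t n (k+1))) (Y' s)| :=
      abs_sub_le _ _ _
    have hε1eq : (Lg + 1) * (c + 3) * ε2 = ε1 := by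
      rw [hε2]
      field_simp
    have hfinal : Lg * (c * |Θ (t n (k+1)) - Θ (t n k)|)
        + Lg * |leftVal (Yn n) (t n (k+1)) - Y' s| ≤ ε1 := by
      have ha1 : Lg * (c * |Θ (t n (k+1)) - Θ (t n k)|) ≤ Lg * (c * ε2) := by
        apply mul_le_mul_of_nonneg_left _ hLg0
        exact mul_le_mul_of_nonneg_left hΔ hc
      have ha2 : Lg * |leftVal (Yn n) (t n (k+1)) - Y' s| ≤ Lg * (3 * ε2) :=
        mul_le_mul_of_nonneg_left h3 hLg0
      have hkey : Lg * (c * ε2) + Lg * (3 * ε2) + (c + 3) * ε2 = (Lg + 1) * (c + 3) * ε2 := by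
        ring
      have hpos : (0:ℝ) ≤ (c + 3) * ε2 := mul_nonneg (by linarith) hε20.le
      linarith [ha1, ha2, hkey, hpos, hε1eq]
    rw [hbfval]
    linarith [htri, htri2, h1, h2, hfinal]
  -- assembly
  have hS'id : ∀ r ∈ Set.Icc (0:ℝ) T, S' r = Sbar r := by
    intro r hr; rw [hS']; simp only; rw [hρid r hr]
  have hY'id : ∀ r ∈ Set.Icc (0:ℝ) T, Y' r = Y r := by
    intro r hr; rw [hY']; simp only; rw [hρid r hr]
  have hfeq1 : ∀ μ : Measure ℝ, (∫ s in Set.Ioc (0:ℝ) u, g (Sbar s) (Y s) ∂μ)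
      = ∫ s in Set.Ioc (0:ℝ) u, f' s ∂μ := by
    intro μ
    apply MeasureTheory.setIntegral_congr_fun measurableSet_Ioc
    intro s hs
    have hsIcc : s ∈ Set.Icc (0:ℝ) T := ⟨hs.1.le, hs.2.trans hu.2⟩
    rw [hf']; simp only
    rw [hS'id s hsIcc, hY'id s hsIcc]
  set v : ℕ → ℝ := fun k => min (t n (min k (m n))) u with hvdef
  have hveq : ∀ k, k ≤ m n → v k = min (t n k) u := by
    intro k hk
    rw [hvdef]; simp only
    rw [min_eq_left hk]
  have hvmono : ∀ k, v k ≤ v (k+1) := by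
    intro k
    rcases Nat.lt_or_ge k (m n) with h1 | h1
    · rw [hveq k h1.le, hveq (k+1) (Nat.succ_le_of_lt h1)]
      exact min_le_min (htmono n k h1).le le_rfl
    · rw [hvdef]; simp only
      rw [min_eq_right h1, min_eq_right (le_trans h1 (Nat.le_succ k))]
  have hv0 : v 0 = 0 := by
    rw [hveq 0 (Nat.zero_le _), ht0 n]
    exact min_eq_left hu.1
  have hvmn : v (m n) = u := by
    rw [hveq (m n) le_rfl, htT n]
    exact min_eq_right hu.2
  have htelep : (∫ s in Set.Ioc (0:ℝ) u, f' s ∂p.measure)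
      = ∑ k ∈ Finset.range (m n), ∫ s in Set.Ioc (v k) (v (k+1)), f' s ∂p.measure := by
    have h1 := tele_setIntegral (μ := p.measure) hf'intp hvmono (m n)
    rwa [hv0, hvmn] at h1
  have hteleq : (∫ s in Set.Ioc (0:ℝ) u, f' s ∂q.measure)
      = ∑ k ∈ Finset.range (m n), ∫ s in Set.Ioc (v k) (v (k+1)), f' s ∂q.measure := by
    have h1 := tele_setIntegral (μ := q.measure) hf'intq hvmono (m n)
    rwa [hv0, hvmn] at h1
  rw [hfeq1 p.measure, hfeq1 q.measure, htelep, hteleq, ← Finset.sum_sub_distrib,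
    ← Finset.sum_sub_distrib]
  refine le_trans (Finset.abs_sum_le_sum_abs _ _) ?_
  have hterm : ∀ k ∈ Finset.range (m n),
      |(if t n (k+1) ≤ u then ξ n (k+1) * (Θ (t n (k+1)) - Θ (t n k)) else 0)
        - ((∫ s in Set.Ioc (v k) (v (k+1)), f' s ∂p.measure)
          - ∫ s in Set.Ioc (v k) (v (k+1)), f' s ∂q.measure)|
      ≤ (ε1 * ((p (t n (k+1)) - p (t n k)) + (q (t n (k+1)) - q (t n k)))
          + ((∫ s in Set.Ioc (t n k) (t n (k+1)), bf n k s ∂p.measure)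
            + ∫ s in Set.Ioc (t n k) (t n (k+1)), bf n k s ∂q.measure))
        + (if t n k ≤ u ∧ u < t n (k+1) then ε/3 else 0) := by
    intro k hkmem
    have hk : k < m n := Finset.mem_range.mp hkmem
    have hk1 : k + 1 ≤ m n := Nat.succ_le_of_lt hk
    have htkmem := htmem n k hk.le
    have ht1mem := htmem n (k+1) hk1
    have htklt := htmono n k hk
    have hvk : v k = min (t n k) u := hveq k hk.le
    have hvk1 : v (k+1) = min (t n (k+1)) u := hveq (k+1) hk1
    have hb0p : 0 ≤ ∫ s in Set.Ioc (t n k) (t n (k+1)), bf n k s ∂p.measure :=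
      MeasureTheory.setIntegral_nonneg measurableSet_Ioc (fun x _ => hbfnn n k x)
    have hb0q : 0 ≤ ∫ s in Set.Ioc (t n k) (t n (k+1)), bf n k s ∂q.measure :=
      MeasureTheory.setIntegral_nonneg measurableSet_Ioc (fun x _ => hbfnn n k x)
    have hΔp0 : 0 ≤ p (t n (k+1)) - p (t n k) := sub_nonneg.mpr (p.mono htklt.le)
    have hΔq0 : 0 ≤ q (t n (k+1)) - q (t n k) := sub_nonneg.mpr (q.mono htklt.le)
    have hif0 : 0 ≤ (if t n k ≤ u ∧ u < t n (k+1) then ε/3 else 0) := by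
      split_ifs
      · linarith
      · exact le_refl 0
    by_cases hub : t n (k+1) ≤ u
    · -- case A
      have hvka : v k = t n k := by rw [hvk]; exact min_eq_left (le_trans htklt.le hub)
      have hvkb : v (k+1) = t n (k+1) := by rw [hvk1]; exact min_eq_left hub
      rw [if_pos hub, hvka, hvkb]
      have hcp : IntegrableOn (fun _ : ℝ => ξ n (k+1)) (Set.Ioc (t n k) (t n (k+1)))
          p.measure :=
        MeasureTheory.integrableOn_const (hpfin _ _)
      have hcq : IntegrableOn (fun _ : ℝ => ξ n (k+1)) (Set.Ioc (t n k) (t n (k+1)))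
          q.measure :=
        MeasureTheory.integrableOn_const (hqfin _ _)
      have hdiffintp : IntegrableOn (fun s => |ξ n (k+1) - f' s|)
          (Set.Ioc (t n k) (t n (k+1))) p.measure := (hcp.sub (hf'intp _ _)).abs
      have hdiffintq : IntegrableOn (fun s => |ξ n (k+1) - f' s|)
          (Set.Ioc (t n k) (t n (k+1))) q.measure := (hcq.sub (hf'intq _ _)).abs
      have hrhsintp : IntegrableOn (fun s => ε1 + bf n k s)
          (Set.Ioc (t n k) (t n (k+1))) p.measure := by
        exact MeasureTheory.Integrable.add
          (MeasureTheory.integrableOn_const (hpfin _ _))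
          (hbintp n k _ _)
      have hrhsintq : IntegrableOn (fun s => ε1 + bf n k s)
          (Set.Ioc (t n k) (t n (k+1))) q.measure := by
        exact MeasureTheory.Integrable.add
          (MeasureTheory.integrableOn_const (hqfin _ _))
          (hbintq n k _ _)
      have habsp : |(ξ n (k+1)) * (p (t n (k+1)) - p (t n k))
          - ∫ s in Set.Ioc (t n k) (t n (k+1)), f' s ∂p.measure|
          ≤ ε1 * (p (t n (k+1)) - p (t n k))
            + ∫ s in Set.Ioc (t n k) (t n (k+1)), bf n k s ∂p.measure := by
        have he1 : (ξ n (k+1)) * (p (t n (k+1)) - p (t n k))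
            = ∫ _ in Set.Ioc (t n k) (t n (k+1)), ξ n (k+1) ∂p.measure := by
          rw [MeasureTheory.setIntegral_const, measureReal_def, hpval _ _ htklt.le, smul_eq_mul]
          ring
        rw [he1, ← MeasureTheory.integral_sub hcp (hf'intp _ _)]
        have h2 := MeasureTheory.norm_integral_le_integral_norm
          (μ := p.measure.restrict (Set.Ioc (t n k) (t n (k+1))))
          (f := fun s => ξ n (k+1) - f' s)
        rw [Real.norm_eq_abs] at h2
        refine le_trans h2 ?_
        have h3 : (∫ s in Set.Ioc (t n k) (t n (k+1)), ‖ξ n (k+1) - f' s‖ ∂p.measure)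
            = ∫ s in Set.Ioc (t n k) (t n (k+1)), |ξ n (k+1) - f' s| ∂p.measure := by
          simp [Real.norm_eq_abs]
        rw [h3]
        have h4 : (∫ s in Set.Ioc (t n k) (t n (k+1)), |ξ n (k+1) - f' s| ∂p.measure)
            ≤ ∫ s in Set.Ioc (t n k) (t n (k+1)), (ε1 + bf n k s) ∂p.measure :=
          MeasureTheory.setIntegral_mono_on hdiffintp hrhsintp measurableSet_Ioc
            (fun x hx => hclaim k hk x hx)
        refine le_trans h4 ?_
        rw [MeasureTheory.integral_add
          (MeasureTheory.integrableOn_const (C := ε1) (hpfin _ _))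
          (hbintp n k _ _),
          MeasureTheory.setIntegral_const, measureReal_def, hpval _ _ htklt.le, smul_eq_mul]
        rw [mul_comm]
      have habsq : |(ξ n (k+1)) * (q (t n (k+1)) - q (t n k))
          - ∫ s in Set.Ioc (t n k) (t n (k+1)), f' s ∂q.measure|
          ≤ ε1 * (q (t n (k+1)) - q (t n k))
            + ∫ s in Set.Ioc (t n k) (t n (k+1)), bf n k s ∂q.measure := by
        have he1 : (ξ n (k+1)) * (q (t n (k+1)) - q (t n k))
            = ∫ _ in Set.Ioc (t n k) (t n (k+1)), ξ n (k+1) ∂q.measure := by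
          rw [MeasureTheory.setIntegral_const, measureReal_def, hqval _ _ htklt.le, smul_eq_mul]
          ring
        rw [he1, ← MeasureTheory.integral_sub hcq (hf'intq _ _)]
        have h2 := MeasureTheory.norm_integral_le_integral_norm
          (μ := q.measure.restrict (Set.Ioc (t n k) (t n (k+1))))
          (f := fun s => ξ n (k+1) - f' s)
        rw [Real.norm_eq_abs] at h2
        refine le_trans h2 ?_
        have h3 : (∫ s in Set.Ioc (t n k) (t n (k+1)), ‖ξ n (k+1) - f' s‖ ∂q.measure)
            = ∫ s in Set.Ioc (t n k) (t n (k+1)), |ξ n (k+1) - f' s| ∂q.measure := by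
          simp [Real.norm_eq_abs]
        rw [h3]
        have h4 : (∫ s in Set.Ioc (t n k) (t n (k+1)), |ξ n (k+1) - f' s| ∂q.measure)
            ≤ ∫ s in Set.Ioc (t n k) (t n (k+1)), (ε1 + bf n k s) ∂q.measure :=
          MeasureTheory.setIntegral_mono_on hdiffintq hrhsintq measurableSet_Ioc
            (fun x hx => hclaim k hk x hx)
        refine le_trans h4 ?_
        rw [MeasureTheory.integral_add
          (MeasureTheory.integrableOn_const (C := ε1) (hqfin _ _))
          (hbintq n k _ _),
          MeasureTheory.setIntegral_const, measureReal_def, hqval _ _ htklt.le, smul_eq_mul]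
        rw [mul_comm]
      have hθsplit : Θ (t n (k+1)) - Θ (t n k)
          = (p (t n (k+1)) - p (t n k)) - (q (t n (k+1)) - q (t n k)) := by
        rw [hΘdef, hΘdef]; ring
      have hexpr : ξ n (k+1) * (Θ (t n (k+1)) - Θ (t n k))
          - ((∫ s in Set.Ioc (t n k) (t n (k+1)), f' s ∂p.measure)
            - ∫ s in Set.Ioc (t n k) (t n (k+1)), f' s ∂q.measure)
          = ((ξ n (k+1)) * (p (t n (k+1)) - p (t n k))
              - ∫ s in Set.Ioc (t n k) (t n (k+1)), f' s ∂p.measure)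
            - ((ξ n (k+1)) * (q (t n (k+1)) - q (t n k))
              - ∫ s in Set.Ioc (t n k) (t n (k+1)), f' s ∂q.measure) := by
        rw [hθsplit]; ring
      rw [hexpr]
      refine le_trans (abs_sub _ _) ?_
      have h5 := add_le_add habsp habsq
      refine le_trans h5 ?_
      have h6 : ε1 * (p (t n (k+1)) - p (t n k)) + ε1 * (q (t n (k+1)) - q (t n k))
          = ε1 * ((p (t n (k+1)) - p (t n k)) + (q (t n (k+1)) - q (t n k))) := by ring
      linarith [hif0]
    · by_cases hau : t n k ≤ u
      · -- case B
        have hulT : u < t n (k+1) := not_le.mp hub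
        have hvka : v k = t n k := by rw [hvk]; exact min_eq_left hau
        have hvkb : v (k+1) = u := by rw [hvk1]; exact min_eq_right hulT.le
        rw [if_neg hub, hvka, hvkb, zero_sub, abs_neg]
        have hmesh3 : t n (k+1) - t n k ≤ min δp δq := hN3 n hn3 k hk
        have hpb : |∫ s in Set.Ioc (t n k) u, f' s ∂p.measure| ≤ Mg * (p u - p (t n k)) := by
          have h1 := MeasureTheory.norm_setIntegral_le_of_norm_le_const
            (μ := p.measure) (s := Set.Ioc (t n k) u) (C := Mg)
            (lt_top_iff_ne_top.mpr (hpfin _ _))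
            (fun x _ => by rw [Real.norm_eq_abs]; exact hf'b x)
          rw [Real.norm_eq_abs, measureReal_def, hpval _ _ hau] at h1
          exact h1
        have hqb : |∫ s in Set.Ioc (t n k) u, f' s ∂q.measure| ≤ Mg * (q u - q (t n k)) := by
          have h1 := MeasureTheory.norm_setIntegral_le_of_norm_le_const
            (μ := q.measure) (s := Set.Ioc (t n k) u) (C := Mg)
            (lt_top_iff_ne_top.mpr (hqfin _ _))
            (fun x _ => by rw [Real.norm_eq_abs]; exact hf'b x)
          rw [Real.norm_eq_abs, measureReal_def, hqval _ _ hau] at h1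
          exact h1
        have hpu : p u - p (t n k) ≤ εpq := by
          have h2 := hδp (t n k) htkmem u hu (by
            rw [abs_sub_comm, abs_of_nonneg (sub_nonneg.mpr hau)]
            have h3 := min_le_left δp δq
            linarith)
          calc p u - p (t n k) ≤ |p u - p (t n k)| := le_abs_self _
            _ = |p (t n k) - p u| := abs_sub_comm _ _
            _ ≤ εpq := h2
        have hqu : q u - q (t n k) ≤ εpq := by
          have h2 := hδq (t n k) htkmem u hu (by
            rw [abs_sub_comm, abs_of_nonneg (sub_nonneg.mpr hau)]
            have h3 := min_le_right δp δq
            linarith)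
          calc q u - q (t n k) ≤ |q u - q (t n k)| := le_abs_self _
            _ = |q (t n k) - q u| := abs_sub_comm _ _
            _ ≤ εpq := h2
        have hMgb2 : Mg * (p u - p (t n k)) + Mg * (q u - q (t n k)) ≤ ε/3 := by
          have h3 : Mg * (p u - p (t n k)) ≤ Mg * εpq := mul_le_mul_of_nonneg_left hpu hMg0
          have h4 : Mg * (q u - q (t n k)) ≤ Mg * εpq := mul_le_mul_of_nonneg_left hqu hMg0
          have h6 : Mg * εpq ≤ (Mg+1) * εpq := mul_le_mul_of_nonneg_right (by linarith)
            hεpq0.le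
          have h7 : (Mg+1) * εpq = ε/6 := by
            rw [hεpq]
            field_simp
          linarith
        rw [if_pos ⟨hau, hulT⟩]
        refine le_trans (abs_sub _ _) ?_
        have hbudget : 0 ≤ ε1 * ((p (t n (k+1)) - p (t n k)) + (q (t n (k+1)) - q (t n k)))
            + ((∫ s in Set.Ioc (t n k) (t n (k+1)), bf n k s ∂p.measure)
              + ∫ s in Set.Ioc (t n k) (t n (k+1)), bf n k s ∂q.measure) :=
          add_nonneg (mul_nonneg hε10.le (add_nonneg hΔp0 hΔq0)) (add_nonneg hb0p hb0q)
        linarith [hpb, hqb, hMgb2]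
      · -- case C
        have hua : u < t n k := not_le.mp hau
        have hvka : v k = u := by rw [hvk]; exact min_eq_right hua.le
        have hvkb : v (k+1) = u := by rw [hvk1]; exact min_eq_right (hua.trans htklt).le
        have hifz : ¬ (t n (k+1) ≤ u) := hub
        rw [if_neg hifz, hvka, hvkb, Set.Ioc_self]
        have hz1 : (∫ s in (∅ : Set ℝ), f' s ∂p.measure) = 0 := by simp
        have hz2 : (∫ s in (∅ : Set ℝ), f' s ∂q.measure) = 0 := by simp
        rw [hz1, hz2]
        simp only [sub_zero, zero_sub, abs_neg, abs_zero]
        have hbudget : 0 ≤ ε1 * ((p (t n (k+1)) - p (t n k)) + (q (t n (k+1)) - q (t n k)))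
            + ((∫ s in Set.Ioc (t n k) (t n (k+1)), bf n k s ∂p.measure)
              + ∫ s in Set.Ioc (t n k) (t n (k+1)), bf n k s ∂q.measure) :=
          add_nonneg (mul_nonneg hε10.le (add_nonneg hΔp0 hΔq0)) (add_nonneg hb0p hb0q)
        linarith [hif0]
  refine le_trans (Finset.sum_le_sum hterm) ?_
  rw [Finset.sum_add_distrib, Finset.sum_add_distrib, Finset.sum_add_distrib,
    ← Finset.mul_sum]
  have hsumpq : ∑ k ∈ Finset.range (m n),
      ((p (t n (k+1)) - p (t n k)) + (q (t n (k+1)) - q (t n k))) = V := by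
    rw [Finset.sum_add_distrib, Finset.sum_range_sub (fun k => (p (t n k) : ℝ)),
      Finset.sum_range_sub (fun k => (q (t n k) : ℝ)), ht0 n, htT n, hV]
  have hsumif : ∑ k ∈ Finset.range (m n),
      (if t n k ≤ u ∧ u < t n (k+1) then ε/3 else 0) ≤ ε/3 := by
    by_cases hex : ∃ k0, k0 ∈ Finset.range (m n) ∧ (t n k0 ≤ u ∧ u < t n (k0+1))
    · obtain ⟨k0, hk0mem, hk0⟩ := hex
      rw [Finset.sum_eq_single_of_mem k0 hk0mem]
      · rw [if_pos hk0]
      · intro j hj hjk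
        rw [if_neg]
        intro hjcond
        exact hjk (huniqIco n j k0 (Finset.mem_range.mp hj) (Finset.mem_range.mp hk0mem) u
          hjcond.1 hjcond.2 hk0.1 hk0.2)
    · push_neg at hex
      rw [Finset.sum_eq_zero (fun k hk => if_neg
        (fun hcond => absurd hcond.2 (not_lt.mpr (hex k hk hcond.1))))]
      linarith
  have hB := hN4 n hn4
  have hε1V : ε1 * V ≤ ε/3 := by
    have h1 : ε1 * V ≤ ε1 * (V + 1) := mul_le_mul_of_nonneg_left (by linarith) hε10.le
    have h2 : ε1 * (V+1) = ε/3 := by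
      rw [hε1]
      field_simp
    linarith
  rw [hsumpq]
  linarith [hsumif, hB, hε1V]
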